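/- arXiv:1610.09780 — 6 statements merged into one kernel-verified Lean document; each statement's English description precedes it below -/
import Mathlib

section
/- If Y ~ NegativeBinomial(r, p) and independently Z ~ NegativeBinomial(r', p), then the conditional distribution of Y given Y + Z = n is BetaBinomial(n, r, r'). -/
open Real Finset

/-- pmf of the (untruncated) negative binomial distribution NegBin(r,p). -/
noncomputable def negBinPmf (r p : ℝ) (y : ℕ) : ℝ :=
  Real.Gamma (y + r) / (Nat.factorial y * Real.Gamma r) * (1 - p) ^ r * p ^ y

/-- pmf of the beta-binomial distribution BetaBin(n,a,b), with
    B(a,b) = Γ(a)Γ(b)/Γ(a+b). -/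
noncomputable def betaBinPmf (n : ℕ) (a b : ℝ) (x : ℕ) : ℝ :=
  (n.choose x) *
    (Real.Gamma (x + a) * Real.Gamma ((n : ℝ) - x + b) / Real.Gamma ((n : ℝ) + a + b)) /
    (Real.Gamma a * Real.Gamma b / Real.Gamma (a + b))


noncomputable def gfun (r : ℝ) (y : ℕ) : ℝ := Real.Gamma (y + r) / Nat.factorial y

lemma gfun_zero (r : ℝ) : gfun r 0 = Real.Gamma r := by simp [gfun]

lemma gfun_succ (r : ℝ) (hr : 0 < r) (y : ℕ) :
    ((y : ℝ) + 1) * gfun r (y + 1) = ((y : ℝ) + r) * gfun r y := by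
  have hpos : (0:ℝ) < (y:ℝ) + r := by positivity
  have h : Real.Gamma ((y:ℝ) + r + 1) = ((y:ℝ) + r) * Real.Gamma ((y:ℝ) + r) :=
    Real.Gamma_add_one (ne_of_gt hpos)
  have hf : (Nat.factorial y : ℝ) ≠ 0 := by positivity
  simp only [gfun, Nat.factorial_succ]
  push_cast
  rw [show ((y:ℝ)+1)+r = (y:ℝ)+r+1 by ring, h]
  field_simp

lemma conv_sum (r r' : ℝ) (hr : 0 < r) (hr' : 0 < r') (n : ℕ) :
    ∑ y ∈ Finset.range (n + 1), gfun r y * gfun r' (n - y) =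
      Real.Gamma ((n:ℝ) + r + r') * Real.Gamma r * Real.Gamma r' /
        (Nat.factorial n * Real.Gamma (r + r')) := by
  induction n with
  | zero =>
      have h : Real.Gamma (r + r') ≠ 0 := (Real.Gamma_pos_of_pos (by positivity)).ne'
      simp [gfun_zero]
      field_simp
  | succ n ih =>
      have key : ((n:ℝ) + 1) * ∑ y ∈ Finset.range (n + 2), gfun r y * gfun r' (n + 1 - y) =
          ((n:ℝ) + r + r') * ∑ y ∈ Finset.range (n + 1), gfun r y * gfun r' (n - y) := by
        have split : ∀ y ∈ Finset.range (n + 2),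
            ((n:ℝ) + 1) * (gfun r y * gfun r' (n + 1 - y)) =
            (y:ℝ) * gfun r y * gfun r' (n + 1 - y)
              + ((n + 1 - y : ℕ) : ℝ) * gfun r' (n + 1 - y) * gfun r y := by
          intro y hy
          have hy' : y ≤ n + 1 := Nat.lt_succ_iff.mp (Finset.mem_range.mp hy)
          have : ((n + 1 - y : ℕ) : ℝ) = (n:ℝ) + 1 - y := by
            push_cast [Nat.cast_sub hy']; ring
          rw [this]; ring
        rw [Finset.mul_sum, Finset.sum_congr rfl split, Finset.sum_add_distrib]
        have A : ∑ y ∈ Finset.range (n + 2), (y:ℝ) * gfun r y * gfun r' (n + 1 - y)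
            = ∑ y ∈ Finset.range (n + 1), ((y:ℝ) + r) * (gfun r y * gfun r' (n - y)) := by
          rw [Finset.sum_range_succ' (fun y => (y:ℝ) * gfun r y * gfun r' (n + 1 - y)) (n+1)]
          simp only [Nat.cast_zero, zero_mul, add_zero, zero_mul, mul_zero]
          refine Finset.sum_congr rfl fun y hy => ?_
          have h1 : n + 1 - (y + 1) = n - y := by omega
          rw [h1, Nat.cast_add, Nat.cast_one, gfun_succ r hr y]
          ring
        have B : ∑ y ∈ Finset.range (n + 2), ((n + 1 - y : ℕ) : ℝ) * gfun r' (n + 1 - y) * gfun r y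
            = ∑ y ∈ Finset.range (n + 1), (((n:ℝ) - y) + r') * (gfun r y * gfun r' (n - y)) := by
          rw [Finset.sum_range_succ]
          simp only [Nat.sub_self, Nat.cast_zero, zero_mul]
          rw [add_zero]
          refine Finset.sum_congr rfl ?_
          intro y hy
          have hy' : y ≤ n := Nat.lt_succ_iff.mp (Finset.mem_range.mp hy)
          have h1 : n + 1 - y = (n - y) + 1 := by omega
          have h2 : (((n - y : ℕ):ℝ) + 1) * gfun r' ((n - y) + 1)
              = (((n - y : ℕ):ℝ) + r') * gfun r' (n - y) := gfun_succ r' hr' (n - y)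
          rw [h1]
          have h3 : (((n - y : ℕ) + 1 : ℕ) : ℝ) = ((n - y : ℕ):ℝ) + 1 := by push_cast; ring
          rw [h3, h2]
          have h4 : ((n - y : ℕ):ℝ) = (n:ℝ) - y := by push_cast [Nat.cast_sub hy']; ring
          rw [h4]; ring
        rw [A, B, ← Finset.sum_add_distrib, Finset.mul_sum]
        refine Finset.sum_congr rfl fun y hy => by ring
      have hn1 : ((n:ℝ) + 1) ≠ 0 := by positivity
      have hGam : Real.Gamma ((n:ℝ) + 1 + r + r')
          = ((n:ℝ) + r + r') * Real.Gamma ((n:ℝ) + r + r') := by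
        rw [show (n:ℝ) + 1 + r + r' = ((n:ℝ) + r + r') + 1 by ring]
        exact Real.Gamma_add_one (by positivity)
      have := key
      rw [ih] at this
      have lhs_eq : ∑ y ∈ Finset.range (n + 2), gfun r y * gfun r' (n + 1 - y)
          = ((n:ℝ) + r + r') * (Real.Gamma ((n:ℝ) + r + r') * Real.Gamma r * Real.Gamma r' /
              (Nat.factorial n * Real.Gamma (r + r'))) / ((n:ℝ) + 1) := by
        field_simp at this ⊢
        linarith [this]
      rw [show n + 1 + 1 = n + 2 from rfl] at *
      rw [lhs_eq]
      push_cast [Nat.factorial_succ, hGam]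
      have hf : (Nat.factorial n : ℝ) ≠ 0 := by positivity
      have hG : Real.Gamma (r + r') ≠ 0 := (Real.Gamma_pos_of_pos (by positivity)).ne'
      field_simp

/-- If `Y ~ NegBin(r,p)` and independently `Z ~ NegBin(r',p)`, then the conditional
distribution of `Y` given `Y + Z = n` is `BetaBin(n, r, r')`. -/
theorem negbin_cond_sum_betaBinomial (r r' p : ℝ) (hr : 0 < r) (hr' : 0 < r')
    (hp0 : 0 < p) (hp1 : p < 1) (n x : ℕ) (hx : x ≤ n) :
    negBinPmf r p x * negBinPmf r' p (n - x) /
      (∑ y ∈ Finset.range (n + 1), negBinPmf r p y * negBinPmf r' p (n - y)) =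
    betaBinPmf n r r' x := by
  have hq : (0:ℝ) < 1 - p := by linarith
  have hGr : 0 < Real.Gamma r := Real.Gamma_pos_of_pos hr
  have hGr' : 0 < Real.Gamma r' := Real.Gamma_pos_of_pos hr'
  set C : ℝ := (1 - p) ^ r * (1 - p) ^ r' * p ^ n / (Real.Gamma r * Real.Gamma r') with hC
  have hCpos : 0 < C := by
    have h1 : (0:ℝ) < (1 - p) ^ r := Real.rpow_pos_of_pos hq r
    have h2 : (0:ℝ) < (1 - p) ^ r' := Real.rpow_pos_of_pos hq r'
    positivity
  have hterm : ∀ y, y ≤ n → negBinPmf r p y * negBinPmf r' p (n - y)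
      = C * (gfun r y * gfun r' (n - y)) := by
    intro y hy
    simp only [negBinPmf, gfun, hC]
    rw [pow_sub₀ p hp0.ne' hy]
    have hfy : (Nat.factorial y : ℝ) ≠ 0 := Nat.cast_ne_zero.mpr y.factorial_ne_zero
    have hfny : (Nat.factorial (n - y) : ℝ) ≠ 0 := Nat.cast_ne_zero.mpr (n-y).factorial_ne_zero
    field_simp
  have hsum : ∑ y ∈ Finset.range (n+1), negBinPmf r p y * negBinPmf r' p (n - y)
      = C * ∑ y ∈ Finset.range (n+1), gfun r y * gfun r' (n - y) := by
    rw [Finset.mul_sum]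
    exact Finset.sum_congr rfl fun y hy => hterm y (Nat.lt_succ_iff.mp (Finset.mem_range.mp hy))
  rw [hsum, hterm x hx, conv_sum r r' hr hr' n, mul_div_mul_left _ _ hCpos.ne']
  simp only [gfun, betaBinPmf]
  have hcast : ((n - x : ℕ) : ℝ) = (n:ℝ) - x := by push_cast [Nat.cast_sub hx]; ring
  rw [hcast]
  have hchoose : ((n.choose x : ℝ)) * x.factorial * (n-x).factorial = n.factorial := by
    exact_mod_cast congrArg (Nat.cast : ℕ → ℝ) (Nat.choose_mul_factorial_mul_factorial hx)
  rw [show ((n.factorial : ℕ) : ℝ) = (n.choose x) * x.factorial * (n-x).factorial from hchoose.symm]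
  have hGn : Real.Gamma ((n:ℝ) + r + r') ≠ 0 := (Real.Gamma_pos_of_pos (by positivity)).ne'
  have hGrr : Real.Gamma (r + r') ≠ 0 := (Real.Gamma_pos_of_pos (by positivity)).ne'
  have hfx : (Nat.factorial x : ℝ) ≠ 0 := Nat.cast_ne_zero.mpr x.factorial_ne_zero
  have hfnx : (Nat.factorial (n - x) : ℝ) ≠ 0 := Nat.cast_ne_zero.mpr (n-x).factorial_ne_zero
  have hch : ((n.choose x : ℕ) : ℝ) ≠ 0 := Nat.cast_ne_zero.mpr (Nat.choose_pos hx).ne'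
  field_simp
end

section
/- Fix r > 0 and b > (r+1)/r. If θ_k ~ Beta(r, (k-1)r), then k · P(θ_k ≥ (b log k)/k) → 0 as k → ∞. -/
open Real Filter

lemma Gamma_add_nat_le (x : ℝ) (hx : 0 < x) : ∀ n : ℕ,
    Real.Gamma (x + n) ≤ Real.Gamma x * (x + n) ^ (n : ℕ)
  | 0 => by simp
  | (n+1) => by
    have hxn : 0 < x + n := by positivity
    have h1 : Real.Gamma (x + (n + 1 : ℕ)) = (x + n) * Real.Gamma (x + n) := by
      rw [show x + ((n : ℕ) + 1 : ℕ) = (x + n) + 1 by push_cast; ring,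
        Real.Gamma_add_one hxn.ne']
    rw [h1]
    have ih := Gamma_add_nat_le x hx n
    calc (x + n) * Real.Gamma (x + n) ≤ (x + n) * (Real.Gamma x * (x + n) ^ (n : ℕ)) :=
          mul_le_mul_of_nonneg_left ih hxn.le
      _ ≤ (x + (n+1:ℕ)) * (Real.Gamma x * (x + (n+1:ℕ)) ^ (n : ℕ)) := by
          have h2 : x + (n:ℝ) ≤ x + ((n+1:ℕ):ℝ) := by push_cast; linarith
          have h3 : (x + n) ^ (n:ℕ) ≤ (x + ((n+1:ℕ):ℝ)) ^ (n:ℕ) :=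
            pow_le_pow_left₀ hxn.le h2 n
          have hG := Real.Gamma_pos_of_pos hx
          gcongr
      _ = Real.Gamma x * (x + (n+1:ℕ)) ^ ((n+1 : ℕ)) := by ring

lemma Gamma_add_frac_le (x t : ℝ) (hx : 0 < x) (ht0 : 0 ≤ t) (ht1 : t < 1) :
    Real.Gamma (x + t) ≤ Real.Gamma x * x ^ t := by
  rcases eq_or_lt_of_le ht0 with h0 | h0
  · simp [← h0]
  · have key := Real.Gamma_mul_add_mul_le_rpow_Gamma_mul_rpow_Gamma
      (s := x) (t := x + 1) hx (by positivity) (a := 1 - t) (b := t)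
      (by linarith) h0 (by ring)
    have e1 : (1 - t) * x + t * (x + 1) = x + t := by ring
    rw [e1] at key
    have hG := Real.Gamma_pos_of_pos hx
    calc Real.Gamma (x + t) ≤ Real.Gamma x ^ (1 - t) * Real.Gamma (x + 1) ^ t := key
      _ = Real.Gamma x ^ (1 - t) * (x * Real.Gamma x) ^ t := by
          rw [Real.Gamma_add_one hx.ne']
      _ = Real.Gamma x * x ^ t := by
          rw [Real.mul_rpow hx.le hG.le]
          rw [show Real.Gamma x ^ (1 - t) * (x ^ t * Real.Gamma x ^ t)
              = (Real.Gamma x ^ (1 - t) * Real.Gamma x ^ t) * x ^ t by ring,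
            ← Real.rpow_add hG]
          norm_num

lemma Gamma_add_le (x s : ℝ) (hx : 0 < x) (hs : 0 ≤ s) :
    Real.Gamma (x + s) ≤ Real.Gamma x * (x + s) ^ s := by
  set n : ℕ := ⌊s⌋₊ with hn
  set t : ℝ := s - n with htdef
  have ht0 : 0 ≤ t := sub_nonneg.2 (Nat.floor_le hs)
  have ht1 : t < 1 := by
    have := Nat.lt_floor_add_one s
    simp only [htdef]; linarith
  have hxt : 0 < x + t := by positivity
  have hxsp : 0 < x + s := by positivity
  have e1 : x + s = (x + t) + n := by simp [htdef]; ring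
  have step1 : Real.Gamma (x + s) ≤ Real.Gamma (x + t) * (x + s) ^ (n : ℕ) := by
    rw [e1]; exact Gamma_add_nat_le (x + t) hxt n
  have step2 : Real.Gamma (x + t) ≤ Real.Gamma x * x ^ t := Gamma_add_frac_le x t hx ht0 ht1
  have step3 : x ^ t ≤ (x + s) ^ t := by
    apply Real.rpow_le_rpow hx.le (by linarith) ht0
  calc Real.Gamma (x + s) ≤ Real.Gamma (x + t) * (x + s) ^ (n : ℕ) := step1
    _ ≤ (Real.Gamma x * (x + s) ^ t) * (x + s) ^ (n : ℕ) :=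
        mul_le_mul_of_nonneg_right
          (step2.trans (mul_le_mul_of_nonneg_left step3 (Real.Gamma_pos_of_pos hx).le))
          (pow_nonneg hxsp.le n)
    _ = Real.Gamma x * (x + s) ^ s := by
        rw [mul_assoc, ← Real.rpow_natCast (x+s) n, ← Real.rpow_add hxsp,
          show t + (n:ℝ) = s by rw [htdef]; ring]

/-- Fix `r > 0` and `b > (r+1)/r`. If `θ_k ~ Beta(r, (k-1)r)`, then
`k · P(θ_k ≥ (b log k)/k) → 0` as `k → ∞`.  Here the beta tail probability is
written as an integral of the beta density, with `B(α,β) = Γ(α)Γ(β)/Γ(α+β)`. -/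
theorem beta_tail_tendsto_zero (r b : ℝ) (hr : 0 < r) (hb : b > (r + 1) / r) :
    Tendsto (fun k : ℕ =>
        (k : ℝ) *
          ∫ θ in (b * Real.log k / k)..1,
            θ ^ (r - 1) * (1 - θ) ^ (((k : ℝ) - 1) * r - 1) /
              (Real.Gamma r * Real.Gamma (((k : ℝ) - 1) * r) / Real.Gamma ((k : ℝ) * r)))
      atTop (nhds 0) := by
  have hrb : r + 1 < r * b := by
    have h := (div_lt_iff₀ hr).mp hb
    nlinarith
  have hb0 : 0 < b := by nlinarith
  set ε : ℝ := r * b - r - 1 with hεdef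
  have hε0 : 0 < ε := by simp only [hεdef]; linarith
  have hΓr : 0 < Real.Gamma r := Real.Gamma_pos_of_pos hr
  set C : ℝ := Real.exp (r * b) * r ^ r * 2 / (b * r * Real.Gamma r) with hCdef
  -- the dominating sequence tends to zero
  have hg : Tendsto (fun k : ℕ => C * (k : ℝ) ^ (-ε)) atTop (nhds 0) := by
    have h1 : Tendsto (fun k : ℕ => ((k : ℝ)) ^ (-ε)) atTop (nhds 0) :=
      (tendsto_rpow_neg_atTop hε0).comp tendsto_natCast_atTop_atTop
    simpa using h1.const_mul C
  -- eventual smallness of `log k / k`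
  have hlo : (fun k : ℕ => Real.log k) =o[atTop] (fun k : ℕ => (k : ℝ)) :=
    Real.isLittleO_log_id_atTop.comp_tendsto tendsto_natCast_atTop_atTop
  have hE2 : ∀ᶠ k : ℕ in atTop, ‖Real.log k‖ ≤ 1 / (2 * b) * ‖(k : ℝ)‖ :=
    hlo.def (by positivity)
  have hE3 : ∀ᶠ k : ℕ in atTop, 2 ≤ ((k : ℝ) - 1) * r := by
    have hts : Tendsto (fun k : ℕ => ((k : ℝ) - 1) * r) atTop atTop := by
      apply Tendsto.atTop_mul_const hr
      exact tendsto_atTop_add_const_right atTop (-1 : ℝ) tendsto_natCast_atTop_atTop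
    exact hts.eventually_ge_atTop 2
  apply squeeze_zero' ?_ ?_ hg
  · -- nonnegativity
    filter_upwards [eventually_ge_atTop 3, hE2, hE3] with k hk3 hk2 hks
    have hk0 : (0 : ℝ) < k := by exact_mod_cast Nat.lt_of_lt_of_le (by norm_num) hk3
    have hlog1 : 1 ≤ Real.log k := by
      rw [Real.le_log_iff_exp_le hk0]
      calc Real.exp 1 ≤ 2.7182818286 := Real.exp_one_lt_d9.le
        _ ≤ (3 : ℕ) := by norm_num
        _ ≤ (k : ℝ) := by exact_mod_cast hk3
    have ha0 : 0 < b * Real.log k / k := by positivity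
    have ha : b * Real.log k / k ≤ 1 / 2 := by
      rw [div_le_iff₀ hk0]
      have h2 : Real.log k ≤ 1 / (2 * b) * (k : ℝ) := by
        have := hk2
        rwa [Real.norm_eq_abs, Real.norm_eq_abs, abs_of_nonneg (by linarith),
          abs_of_nonneg hk0.le] at this
      calc b * Real.log k ≤ b * (1 / (2 * b) * (k : ℝ)) := by
            exact mul_le_mul_of_nonneg_left h2 hb0.le
        _ = 1 / 2 * (k : ℝ) := by field_simp
    have ha1 : b * Real.log k / k ≤ 1 := ha.trans (by norm_num)
    have hBpos : 0 < Real.Gamma r * Real.Gamma (((k : ℝ) - 1) * r) / Real.Gamma ((k : ℝ) * r) := by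
      have h1 : 0 < Real.Gamma (((k : ℝ) - 1) * r) := Real.Gamma_pos_of_pos (by nlinarith)
      have h2 : 0 < Real.Gamma ((k : ℝ) * r) := Real.Gamma_pos_of_pos (by positivity)
      positivity
    apply mul_nonneg hk0.le
    apply intervalIntegral.integral_nonneg ha1
    intro θ hθ
    have hθ0 : 0 ≤ θ := le_trans ha0.le hθ.1
    have hθ1 : θ ≤ 1 := hθ.2
    apply div_nonneg _ hBpos.le
    exact mul_nonneg (Real.rpow_nonneg hθ0 _) (Real.rpow_nonneg (by linarith) _)
  · -- the main bound
    filter_upwards [eventually_ge_atTop 3, hE2, hE3] with k hk3 hk2 hks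
    have hk0 : (0 : ℝ) < k := by exact_mod_cast Nat.lt_of_lt_of_le (by norm_num) hk3
    have hlog1 : 1 ≤ Real.log k := by
      rw [Real.le_log_iff_exp_le hk0]
      calc Real.exp 1 ≤ 2.7182818286 := Real.exp_one_lt_d9.le
        _ ≤ (3 : ℕ) := by norm_num
        _ ≤ (k : ℝ) := by exact_mod_cast hk3
    set a : ℝ := b * Real.log k / k with hadef
    set s : ℝ := ((k : ℝ) - 1) * r with hsdef
    have ha0 : 0 < a := by rw [hadef]; positivity
    have ha : a ≤ 1 / 2 := by
      rw [hadef, div_le_iff₀ hk0]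
      have h2 : Real.log k ≤ 1 / (2 * b) * (k : ℝ) := by
        rwa [Real.norm_eq_abs, Real.norm_eq_abs, abs_of_nonneg (by linarith),
          abs_of_nonneg hk0.le] at hk2
      calc b * Real.log k ≤ b * (1 / (2 * b) * (k : ℝ)) :=
            mul_le_mul_of_nonneg_left h2 hb0.le
        _ = 1 / 2 * (k : ℝ) := by field_simp
    have ha1 : a ≤ 1 := ha.trans (by norm_num)
    have h1a0 : (0:ℝ) ≤ 1 - a := by linarith
    have hs2 : 2 ≤ s := hks
    have hs0 : 0 < s := by linarith
    have hs1 : (0:ℝ) ≤ s - 1 := by linarith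
    have hΓs : 0 < Real.Gamma s := Real.Gamma_pos_of_pos hs0
    have hkr0 : 0 < (k : ℝ) * r := by positivity
    have hΓkr : 0 < Real.Gamma ((k : ℝ) * r) := Real.Gamma_pos_of_pos hkr0
    have hB : 0 < Real.Gamma r * Real.Gamma s / Real.Gamma ((k : ℝ) * r) := by positivity
    -- continuity / integrability
    have hc2 : Continuous (fun θ : ℝ => (1 - θ) ^ (s - 1)) := by
      have h := continuous_iff_continuousAt.2
        (fun x : ℝ => Real.continuousAt_rpow_const x (s - 1) (Or.inr hs1))
      exact h.comp (continuous_const.sub continuous_id)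
    have hint1 : IntervalIntegrable (fun θ : ℝ => θ ^ (r - 1) * (1 - θ) ^ (s - 1))
        MeasureTheory.volume a 1 := by
      apply ContinuousOn.intervalIntegrable
      apply ContinuousOn.mul _ hc2.continuousOn
      intro θ hθ
      rw [Set.uIcc_of_le ha1] at hθ
      have hθ0 : 0 < θ := lt_of_lt_of_le ha0 hθ.1
      exact (Real.continuousAt_rpow_const θ (r - 1) (Or.inl hθ0.ne')).continuousWithinAt
    have hint2 : IntervalIntegrable (fun θ : ℝ => a⁻¹ * (1 - θ) ^ (s - 1)) MeasureTheory.volume a 1 :=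
      (continuous_const.mul hc2).intervalIntegrable _ _
    have hImono : (∫ θ in a..1, θ ^ (r - 1) * (1 - θ) ^ (s - 1)) ≤
        ∫ θ in a..1, a⁻¹ * (1 - θ) ^ (s - 1) := by
      apply intervalIntegral.integral_mono_on ha1 hint1 hint2
      intro θ hθ
      have hθ0 : 0 < θ := lt_of_lt_of_le ha0 hθ.1
      have hkey : θ ^ (r - 1) ≤ a⁻¹ := by
        calc θ ^ (r - 1) = θ ^ r / θ := by rw [Real.rpow_sub hθ0, Real.rpow_one]
          _ ≤ 1 / a := div_le_div₀ (by norm_num) (Real.rpow_le_one hθ0.le hθ.2 hr.le) ha0 hθ.1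
          _ = a⁻¹ := one_div a
      exact mul_le_mul_of_nonneg_right hkey (Real.rpow_nonneg (by linarith [hθ.2]) _)
    have hIcalc : (∫ θ in a..1, a⁻¹ * (1 - θ) ^ (s - 1)) = a⁻¹ * ((1 - a) ^ s / s) := by
      rw [intervalIntegral.integral_const_mul]
      congr 1
      rw [intervalIntegral.integral_comp_sub_left (fun u : ℝ => u ^ (s - 1)) 1]
      rw [integral_rpow (Or.inl (by linarith : (-1:ℝ) < s - 1))]
      rw [show s - 1 + 1 = s by ring, show (1:ℝ) - 1 = 0 by norm_num,
        Real.zero_rpow hs0.ne']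
      ring
    -- the exponential bound
    have hexp : (1 - a) ^ s ≤ Real.exp (r * b) * (k : ℝ) ^ (-(r * b)) := by
      have h1 : 1 - a ≤ Real.exp (-a) := by linarith [Real.add_one_le_exp (-a)]
      have h2 : (1 - a) ^ s ≤ Real.exp (-a) ^ s := Real.rpow_le_rpow h1a0 h1 hs0.le
      have h3 : Real.exp (-a) ^ s = Real.exp (-a * s) := (Real.exp_mul (-a) s).symm
      have h4 : -a * s = -(r * b) * Real.log k + r * b * (Real.log k / k) := by
        rw [hadef, hsdef]; field_simp; ring
      have h5 : Real.exp (-a * s) =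
          (k : ℝ) ^ (-(r * b)) * Real.exp (r * b * (Real.log k / k)) := by
        rw [h4, Real.exp_add, Real.rpow_def_of_pos hk0, mul_comm (Real.log (k:ℝ)) (-(r * b))]
      have h6 : Real.exp (r * b * (Real.log k / k)) ≤ Real.exp (r * b) := by
        apply Real.exp_le_exp.2
        have hlk : Real.log k / k ≤ 1 := by
          rw [div_le_one hk0]; linarith [Real.log_le_sub_one_of_pos hk0]
        linarith [mul_le_mul_of_nonneg_left hlk (by positivity : (0:ℝ) ≤ r * b)]
      calc (1 - a) ^ s ≤ Real.exp (-a * s) := h2.trans_eq h3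
        _ = (k : ℝ) ^ (-(r * b)) * Real.exp (r * b * (Real.log k / k)) := h5
        _ ≤ (k : ℝ) ^ (-(r * b)) * Real.exp (r * b) :=
            mul_le_mul_of_nonneg_left h6 (Real.rpow_nonneg hk0.le _)
        _ = Real.exp (r * b) * (k : ℝ) ^ (-(r * b)) := mul_comm _ _
    have hainv : a⁻¹ ≤ (k : ℝ) / b := by
      have he : a⁻¹ = (k : ℝ) / (b * Real.log k) := by
        rw [hadef]; field_simp
      rw [he]
      have hble : b ≤ b * Real.log k := le_mul_of_one_le_right hb0.le hlog1
      exact div_le_div_of_nonneg_left hk0.le hb0 hble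
    have hsinv : s⁻¹ ≤ 2 / ((k : ℝ) * r) := by
      have h3k : (3:ℝ) ≤ (k:ℝ) := by exact_mod_cast hk3
      have hkr2 : (k:ℝ) * r ≤ 2 * s := by
        have h := mul_le_mul_of_nonneg_right (by linarith : (k:ℝ) ≤ 2 * ((k:ℝ) - 1)) hr.le
        rw [hsdef]; linarith
      rw [inv_eq_one_div, div_le_div_iff₀ hs0 hkr0]
      linarith
    have hGam : Real.Gamma ((k : ℝ) * r) ≤ Real.Gamma s * ((k : ℝ) ^ r * r ^ r) := by
      have h := Gamma_add_le s r hs0 hr.le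
      rw [show s + r = (k : ℝ) * r by rw [hsdef]; ring, Real.mul_rpow hk0.le hr.le] at h
      exact h
    have hBinv : (Real.Gamma r * Real.Gamma s / Real.Gamma ((k : ℝ) * r))⁻¹ ≤
        ((k : ℝ) ^ r * r ^ r) / Real.Gamma r := by
      rw [inv_div, div_le_div_iff₀ (by positivity) hΓr]
      calc Real.Gamma ((k:ℝ) * r) * Real.Gamma r
          ≤ (Real.Gamma s * ((k:ℝ) ^ r * r ^ r)) * Real.Gamma r :=
            mul_le_mul_of_nonneg_right hGam hΓr.le
        _ = (k:ℝ) ^ r * r ^ r * (Real.Gamma r * Real.Gamma s) := by ring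
    have hpow : (k:ℝ) * (k:ℝ) * (k:ℝ) ^ (-(r * b)) * (k:ℝ) ^ r / (k:ℝ) = (k:ℝ) ^ (-ε) := by
      rw [show -ε = 1 + 1 + -(r * b) + r + -1 by rw [hεdef]; ring]
      rw [Real.rpow_add hk0, Real.rpow_add hk0, Real.rpow_add hk0, Real.rpow_add hk0,
        Real.rpow_one, Real.rpow_neg_one]
      ring
    rw [intervalIntegral.integral_div]
    calc (k:ℝ) * ((∫ θ in a..1, θ ^ (r - 1) * (1 - θ) ^ (s - 1)) /
          (Real.Gamma r * Real.Gamma s / Real.Gamma ((k : ℝ) * r)))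
        ≤ (k:ℝ) * ((a⁻¹ * ((1 - a) ^ s / s)) /
          (Real.Gamma r * Real.Gamma s / Real.Gamma ((k : ℝ) * r))) := by
          apply mul_le_mul_of_nonneg_left _ hk0.le
          exact div_le_div_of_nonneg_right (hImono.trans_eq hIcalc) hB.le
      _ = ((k:ℝ) * (a⁻¹ * ((1 - a) ^ s * s⁻¹))) *
          (Real.Gamma r * Real.Gamma s / Real.Gamma ((k : ℝ) * r))⁻¹ := by
          rw [div_eq_mul_inv ((1-a)^s) s]; ring
      _ ≤ ((k:ℝ) * (((k:ℝ) / b) * ((Real.exp (r * b) * (k:ℝ) ^ (-(r * b))) *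
          (2 / ((k:ℝ) * r))))) * (((k:ℝ) ^ r * r ^ r) / Real.Gamma r) := by
          apply mul_le_mul _ hBinv (inv_nonneg.2 hB.le) _
          · apply mul_le_mul_of_nonneg_left _ hk0.le
            apply mul_le_mul hainv _ _ (by positivity)
            · exact mul_le_mul hexp hsinv (inv_nonneg.2 hs0.le)
                (by positivity)
            · exact mul_nonneg (Real.rpow_nonneg h1a0 _) (inv_nonneg.2 hs0.le)
          · positivity
      _ = C * (k:ℝ) ^ (-ε) := by
          rw [hCdef, ← hpow]
          field_simp
end

section
/- For any fixed a ∈ ℝ, Γ(x+a)/Γ(x) is asymptotically equivalent to x^a as x → ∞, i.e., (Γ(x+a)/Γ(x))/x^a → 1. -/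
open Real Filter

private lemma aux_div_tendsto (c : ℝ) :
    Tendsto (fun x : ℝ => (x + c) / x) atTop (nhds 1) := by
  have h : Tendsto (fun x : ℝ => 1 + c / x) atTop (nhds (1 + 0)) :=
    tendsto_const_nhds.add (tendsto_const_nhds.div_atTop tendsto_id)
  rw [add_zero] at h
  refine h.congr' ?_
  filter_upwards [eventually_gt_atTop 0] with x hx
  field_simp

private lemma gamma_ratio_base (a : ℝ) (ha0 : 0 < a) (ha1 : a < 1) :
    Tendsto (fun x : ℝ => Real.Gamma (x + a) / Real.Gamma x / x ^ a) atTop (nhds 1) := by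
  have hb : 0 < 1 - a := by linarith
  have hlow : Tendsto (fun x : ℝ => (x / (x + a)) ^ (1 - a)) atTop (nhds 1) := by
    have h1 : Tendsto (fun x : ℝ => x / (x + a)) atTop (nhds 1) := by
      have := (aux_div_tendsto a).inv₀ one_ne_zero
      rw [inv_one] at this
      refine this.congr' ?_
      filter_upwards [eventually_gt_atTop (max 0 (-a))] with x hx
      rw [sup_lt_iff] at hx
      field_simp
    have := h1.rpow_const (p := 1 - a) (Or.inr hb.le)
    simpa using this
  refine tendsto_of_tendsto_of_tendsto_of_le_of_le' hlow tendsto_const_nhds ?_ ?_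
  · -- lower bound
    filter_upwards [eventually_ge_atTop 1] with x hx
    have hx0 : (0:ℝ) < x := lt_of_lt_of_le one_pos hx
    have hxa : (0:ℝ) < x + a := by linarith
    have hG : 0 < Real.Gamma x := Real.Gamma_pos_of_pos hx0
    have hGa : 0 < Real.Gamma (x + a) := Real.Gamma_pos_of_pos hxa
    have key := Real.Gamma_mul_add_mul_le_rpow_Gamma_mul_rpow_Gamma hxa
      (by linarith : (0:ℝ) < x + a + 1) ha0 hb (by ring)
    have harg : a * (x + a) + (1 - a) * (x + a + 1) = x + 1 := by ring
    rw [harg, Real.Gamma_add_one (by positivity : x + a ≠ 0),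
      Real.Gamma_add_one (ne_of_gt hx0)] at key
    -- key : x * Γ x ≤ Γ(x+a)^a * ((x+a) * Γ(x+a))^(1-a)
    have hrhs : Real.Gamma (x + a) ^ a * ((x + a) * Real.Gamma (x + a)) ^ (1 - a)
        = Real.Gamma (x + a) * (x + a) ^ (1 - a) := by
      rw [Real.mul_rpow hxa.le hGa.le, ← mul_assoc, mul_comm (Real.Gamma (x+a) ^ a),
        mul_assoc, ← Real.rpow_add hGa]
      simp
      ring
    rw [hrhs] at key
    -- goal : (x / (x+a))^(1-a) ≤ Γ(x+a)/Γ x / x^a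
    rw [Real.div_rpow hx0.le hxa.le, div_div]
    rw [div_le_div_iff₀ (by positivity) (by positivity)]
    calc x ^ (1 - a) * (Real.Gamma x * x ^ a)
        = (x * Real.Gamma x) * 1 := by
          have hxx : x ^ (1 - a) * x ^ a = x := by
            rw [← Real.rpow_add hx0, sub_add_cancel, Real.rpow_one]
          linear_combination Real.Gamma x * hxx
      _ ≤ Real.Gamma (x + a) * (x + a) ^ (1 - a) := by rw [mul_one]; exact key
  · -- upper bound
    filter_upwards [eventually_ge_atTop 1] with x hx
    have hx0 : (0:ℝ) < x := lt_of_lt_of_le one_pos hx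
    have hG : 0 < Real.Gamma x := Real.Gamma_pos_of_pos hx0
    have key := Real.Gamma_mul_add_mul_le_rpow_Gamma_mul_rpow_Gamma hx0
      (by linarith : (0:ℝ) < x + 1) hb ha0 (by ring)
    have harg : (1 - a) * x + a * (x + 1) = x + a := by ring
    rw [harg, Real.Gamma_add_one (ne_of_gt hx0)] at key
    have hrhs : Real.Gamma x ^ (1 - a) * (x * Real.Gamma x) ^ a
        = Real.Gamma x * x ^ a := by
      rw [Real.mul_rpow hx0.le hG.le, ← mul_assoc, mul_comm (Real.Gamma x ^ (1-a)),
        mul_assoc, ← Real.rpow_add hG]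
      simp [mul_comm]
    rw [hrhs] at key
    rw [div_div, div_le_one (by positivity)]
    exact key

private lemma gamma_ratio_step (a : ℝ)
    (h : Tendsto (fun x : ℝ => Real.Gamma (x + a) / Real.Gamma x / x ^ a) atTop (nhds 1)) :
    Tendsto (fun x : ℝ => Real.Gamma (x + (a + 1)) / Real.Gamma x / x ^ (a + 1)) atTop
      (nhds 1) := by
  have := h.mul (aux_div_tendsto a)
  rw [mul_one] at this
  refine this.congr' ?_
  filter_upwards [eventually_gt_atTop (max 0 (-a))] with x hx
  rw [sup_lt_iff] at hx
  have hx0 : (0:ℝ) < x := hx.1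
  have hxa : (0:ℝ) < x + a := by linarith [hx.2]
  rw [show x + (a + 1) = (x + a) + 1 by ring, Real.Gamma_add_one (ne_of_gt hxa),
    Real.rpow_add hx0, Real.rpow_one]
  field_simp

private lemma gamma_ratio_step_down (a : ℝ)
    (h : Tendsto (fun x : ℝ => Real.Gamma (x + a) / Real.Gamma x / x ^ a) atTop (nhds 1)) :
    Tendsto (fun x : ℝ => Real.Gamma (x + (a - 1)) / Real.Gamma x / x ^ (a - 1)) atTop
      (nhds 1) := by
  have h2 : Tendsto (fun x : ℝ => x / (x + (a - 1))) atTop (nhds 1) := by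
    have := (aux_div_tendsto (a - 1)).inv₀ one_ne_zero
    rw [inv_one] at this
    refine this.congr' ?_
    filter_upwards [eventually_gt_atTop (max 0 (-(a-1)))] with x hx
    rw [sup_lt_iff] at hx
    field_simp
  have := h.mul h2
  rw [mul_one] at this
  refine this.congr' ?_
  filter_upwards [eventually_gt_atTop (max 0 (-(a-1)))] with x hx
  rw [sup_lt_iff] at hx
  have hx0 : (0:ℝ) < x := hx.1
  have hxa : (0:ℝ) < x + (a - 1) := by linarith [hx.2]
  have hG : Real.Gamma (x + a) = (x + (a - 1)) * Real.Gamma (x + (a - 1)) := by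
    rw [← Real.Gamma_add_one (ne_of_gt hxa)]
    ring_nf
  rw [hG, Real.rpow_sub hx0 a 1, Real.rpow_one]
  field_simp

/-- For any fixed `a ∈ ℝ`, `Γ(x+a)/Γ(x)` is asymptotically equivalent to `x^a` as
`x → ∞`, i.e. `(Γ(x+a)/Γ(x))/x^a → 1`. -/
theorem gamma_ratio_asymp (a : ℝ) :
    Tendsto (fun x : ℝ => Real.Gamma (x + a) / Real.Gamma x / x ^ a) atTop (nhds 1) := by
  have base : ∀ b : ℝ, 0 ≤ b → b < 1 →
      Tendsto (fun x : ℝ => Real.Gamma (x + b) / Real.Gamma x / x ^ b) atTop (nhds 1) := by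
    intro b hb0 hb1
    rcases eq_or_lt_of_le hb0 with rfl | hb0'
    · refine tendsto_const_nhds.congr' ?_
      filter_upwards [eventually_gt_atTop 0] with x hx
      have hG : Real.Gamma x ≠ 0 := ne_of_gt (Real.Gamma_pos_of_pos hx)
      simp [hG]
    · exact gamma_ratio_base b hb0' hb1
  have key : ∀ (n : ℤ) (b : ℝ), 0 ≤ b → b < 1 →
      Tendsto (fun x : ℝ => Real.Gamma (x + (b + n)) / Real.Gamma x / x ^ (b + (n:ℝ)))
        atTop (nhds 1) := by
    intro n
    induction n using Int.induction_on with
    | zero => intro b hb0 hb1; simpa using base b hb0 hb1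
    | succ k ih =>
      intro b hb0 hb1
      have := gamma_ratio_step _ (ih b hb0 hb1)
      have he : b + ((k:ℤ)+1 : ℤ) = (b + (k:ℝ)) + 1 := by push_cast; ring
      rw [he]
      convert this using 3 <;> push_cast <;> ring
    | pred k ih =>
      intro b hb0 hb1
      have := gamma_ratio_step_down _ (ih b hb0 hb1)
      have he : b + ((-(k:ℤ)-1 : ℤ) : ℝ) = (b + (-(k:ℝ))) - 1 := by push_cast; ring
      rw [he]
      convert this using 3 <;> push_cast <;> ring
  have := key ⌊a⌋ (Int.fract a) (Int.fract_nonneg a) (Int.fract_lt_one a)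
  rwa [Int.fract_add_floor] at this
end

section
/- For the NBNB model, the conditional probability of a partition C_N given N satisfies P(C_N | N, a, q, r, p) ∝ Γ(|C_N| + a) β^{|C_N|} ∏_{c ∈ C_N} Γ(|c| + r)/Γ(r), where β = q(1-p)^r / (1 - (1-p)^r). -/
open Real Finset
open scoped Classical

/-- Truncated (to the positive integers) negative binomial pmf with parameters `a, q`. -/
noncomputable def truncNegBin (a q : ℝ) (k : ℕ) : ℝ :=
  if k = 0 then 0 else
    Real.Gamma (k + a) * q ^ k * (1 - q) ^ a /
      ((1 - (1 - q) ^ a) * Real.Gamma a * Nat.factorial k)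

/-- The KP-model probability of a partition: `P(C) = (|C|! κ_{|C|}/N!) ∏_{c} |c|! μ_{|c|}`. -/
noncomputable def kpWeight {N : ℕ} (κ μ : ℕ → ℝ)
    (C : Finpartition (Finset.univ : Finset (Fin N))) : ℝ :=
  (Nat.factorial C.parts.card : ℝ) * κ C.parts.card / Nat.factorial N *
    ∏ c ∈ C.parts, (Nat.factorial c.card : ℝ) * μ c.card

/-- the target (unnormalized) weight -/
noncomputable def nbnbF {N : ℕ} (a r β : ℝ)
    (C : Finpartition (Finset.univ : Finset (Fin N))) : ℝ :=
  Real.Gamma (C.parts.card + a) * β ^ C.parts.card *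
    ∏ c ∈ C.parts, Real.Gamma (c.card + r) / Real.Gamma r

lemma nbnbF_pos {N : ℕ} (a r β : ℝ) (ha : 0 < a) (hr : 0 < r) (hβ : 0 < β)
    (C : Finpartition (Finset.univ : Finset (Fin N))) : 0 < nbnbF a r β C := by
  have h1 : 0 < Real.Gamma ((C.parts.card : ℝ) + a) :=
    Real.Gamma_pos_of_pos (by positivity)
  have h2 : 0 < ∏ c ∈ C.parts, Real.Gamma ((c.card : ℝ) + r) / Real.Gamma r :=
    Finset.prod_pos fun c _ =>
      div_pos (Real.Gamma_pos_of_pos (by positivity)) (Real.Gamma_pos_of_pos hr)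
  exact mul_pos (mul_pos h1 (pow_pos hβ _)) h2

lemma nbnb_kpWeight_eq (N : ℕ) (hN : 0 < N) (a q r p : ℝ)
    (ha : 0 < a) (hq0 : 0 < q) (hq1 : q < 1) (hr : 0 < r) (hp0 : 0 < p) (hp1 : p < 1)
    (C : Finpartition (Finset.univ : Finset (Fin N))) :
    kpWeight (truncNegBin a q) (truncNegBin r p) C
      = ((1 - q) ^ a / ((1 - (1 - q) ^ a) * Real.Gamma a * Nat.factorial N) * p ^ N) *
        nbnbF a r (q * (1 - p) ^ r / (1 - (1 - p) ^ r)) C := by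
  haveI : Nonempty (Fin N) := Fin.pos_iff_nonempty.mp hN
  have hq' : (0:ℝ) < 1 - q := by linarith
  have hp' : (0:ℝ) < 1 - p := by linarith
  have hpr : (0:ℝ) < (1 - p) ^ r := Real.rpow_pos_of_pos hp' r
  have hpr1 : (0:ℝ) < 1 - (1 - p) ^ r := by
    have := Real.rpow_lt_one hp'.le (by linarith) hr; linarith
  have hΓr : 0 < Real.Gamma r := Real.Gamma_pos_of_pos hr
  have hKne : C.parts.card ≠ 0 := by
    exact Finset.card_ne_zero.mpr (C.parts_nonempty (by simp [Finset.univ_nonempty.ne_empty]))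
  have hsum : ∑ c ∈ C.parts, c.card = N := by simpa using C.sum_card_parts
  have hcne : ∀ c ∈ C.parts, c.card ≠ 0 := by
    intro c hc
    have hne : c ≠ ∅ := by rintro rfl; exact C.bot_notMem hc
    simpa [Finset.card_ne_zero, Finset.nonempty_iff_ne_empty] using hne
  have hprod : ∀ c ∈ C.parts, (Nat.factorial c.card : ℝ) * truncNegBin r p c.card
      = (Real.Gamma (c.card + r) / Real.Gamma r) * ((1 - p) ^ r / (1 - (1 - p) ^ r)) *
        p ^ c.card := by
    intro c hc
    have hfac : (0:ℝ) < Nat.factorial c.card := by exact_mod_cast Nat.factorial_pos _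
    rw [truncNegBin, if_neg (hcne c hc)]
    field_simp
  rw [kpWeight, truncNegBin, if_neg hKne, Finset.prod_congr rfl hprod,
    Finset.prod_mul_distrib, Finset.prod_mul_distrib, Finset.prod_const,
    Finset.prod_pow_eq_pow_sum, hsum, nbnbF]
  have hfacK : (0:ℝ) < Nat.factorial C.parts.card := by exact_mod_cast Nat.factorial_pos _
  have hfacN : (0:ℝ) < Nat.factorial N := by exact_mod_cast Nat.factorial_pos _
  have hqa1 : (0:ℝ) < 1 - (1 - q) ^ a := by
    have := Real.rpow_lt_one hq'.le (by linarith) ha; linarith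
  have hΓa : 0 < Real.Gamma a := Real.Gamma_pos_of_pos ha
  field_simp [hqa1.ne', hpr1.ne', hΓa.ne', hΓr.ne', hfacK.ne', hfacN.ne']
  ring

/-- For the NBNB model (a KP model with `κ = NegBin(a,q)` and `μ = NegBin(r,p)` truncated
to the positive integers), the conditional probability of a partition `C_N` given `N`
satisfies `P(C_N | N, a, q, r, p) ∝ Γ(|C_N| + a) β^{|C_N|} ∏_{c ∈ C_N} Γ(|c| + r)/Γ(r)`,
where `β = q(1-p)^r / (1 - (1-p)^r)`. -/
theorem nbnb_conditional_propto (N : ℕ) (hN : 0 < N) (a q r p : ℝ)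
    (ha : 0 < a) (hq0 : 0 < q) (hq1 : q < 1) (hr : 0 < r) (hp0 : 0 < p) (hp1 : p < 1) :
    ∃ Z : ℝ, 0 < Z ∧
      ∀ C : Finpartition (Finset.univ : Finset (Fin N)),
        kpWeight (truncNegBin a q) (truncNegBin r p) C /
            (∑' C' : Finpartition (Finset.univ : Finset (Fin N)),
              kpWeight (truncNegBin a q) (truncNegBin r p) C')
          = (Real.Gamma (C.parts.card + a) *
                (q * (1 - p) ^ r / (1 - (1 - p) ^ r)) ^ C.parts.card *
                ∏ c ∈ C.parts, Real.Gamma (c.card + r) / Real.Gamma r) / Z := by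
  haveI : Nonempty (Fin N) := Fin.pos_iff_nonempty.mp hN
  set β : ℝ := q * (1 - p) ^ r / (1 - (1 - p) ^ r) with hβdef
  have hq' : (0:ℝ) < 1 - q := by linarith
  have hp' : (0:ℝ) < 1 - p := by linarith
  have hqa : (0:ℝ) < (1 - q) ^ a := Real.rpow_pos_of_pos hq' a
  have hpr : (0:ℝ) < (1 - p) ^ r := Real.rpow_pos_of_pos hp' r
  have hqa1 : (0:ℝ) < 1 - (1 - q) ^ a := by
    have := Real.rpow_lt_one hq'.le (by linarith) ha; linarith
  have hpr1 : (0:ℝ) < 1 - (1 - p) ^ r := by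
    have := Real.rpow_lt_one hp'.le (by linarith) hr; linarith
  have hβpos : 0 < β := by rw [hβdef]; positivity
  have hΓa : 0 < Real.Gamma a := Real.Gamma_pos_of_pos ha
  have hfacN : (0:ℝ) < Nat.factorial N := by exact_mod_cast Nat.factorial_pos N
  set c0 : ℝ := (1 - q) ^ a / ((1 - (1 - q) ^ a) * Real.Gamma a * Nat.factorial N) * p ^ N
    with hc0def
  have hc0pos : 0 < c0 := by rw [hc0def]; positivity
  refine ⟨∑ C' : Finpartition (Finset.univ : Finset (Fin N)), nbnbF a r β C', ?_, ?_⟩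
  · exact Finset.sum_pos (fun C _ => nbnbF_pos a r β ha hr hβpos C) Finset.univ_nonempty
  · intro C
    have hZpos : 0 < ∑ C' : Finpartition (Finset.univ : Finset (Fin N)), nbnbF a r β C' :=
      Finset.sum_pos (fun C _ => nbnbF_pos a r β ha hr hβpos C) Finset.univ_nonempty
    have hts : (∑' C' : Finpartition (Finset.univ : Finset (Fin N)),
        kpWeight (truncNegBin a q) (truncNegBin r p) C')
        = c0 * ∑ C' : Finpartition (Finset.univ : Finset (Fin N)), nbnbF a r β C' := by
      rw [tsum_fintype, Finset.mul_sum]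
      exact Finset.sum_congr rfl fun C' _ =>
        nbnb_kpWeight_eq N hN a q r p ha hq0 hq1 hr hp0 hp1 C'
    rw [hts, nbnb_kpWeight_eq N hN a q r p ha hq0 hq1 hr hp0 hp1 C]
    show c0 * nbnbF a r β C / (c0 * _) = nbnbF a r β C / _
    rw [mul_div_mul_left _ _ (ne_of_gt hc0pos)]
end

section
/- For a KP model, the conditional probability of reassigning element n, given the rest of the partition C_N \ n and N, is proportional to (|c|+1) μ_{|c|+1}/μ_{|c|} for joining an existing cluster c, and proportional to (|C_N \ n| + 1) (κ_{|C_N \ n|+1}/κ_{|C_N \ n|}) μ_1 for forming a new singleton cluster. -/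
open Finset

/-- Unnormalized KP-model probability of a partition with block set `P`:
`|P|! κ_{|P|} ∏_{c ∈ P} |c|! μ_{|c|}` (the `N`-dependent constant is dropped since
we only consider proportionality at fixed `N`). -/
noncomputable def kpW {α : Type*} [DecidableEq α] (κ μ : ℕ → ℝ)
    (P : Finset (Finset α)) : ℝ :=
  (Nat.factorial P.card : ℝ) * κ P.card * ∏ c ∈ P, (Nat.factorial c.card : ℝ) * μ c.card

/-- For a KP model (with `P(C_N | N) ∝ |C_N|! κ_{|C_N|} ∏_{c} |c|! μ_{|c|}`), the
conditional probability of reassigning element `n`, given the rest of the partition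
`C_N \ n` (here `D`, a partition of `s` with `n ∉ s`) is proportional to
`(|c|+1) μ_{|c|+1}/μ_{|c|}` for joining an existing cluster `c ∈ D`, and proportional
to `(|D| + 1)(κ_{|D|+1}/κ_{|D|}) μ₁` for forming a new singleton cluster. -/
theorem kp_reseating_weights {α : Type*} [DecidableEq α] (κ μ : ℕ → ℝ)
    (hμ : ∀ m, 1 ≤ m → 0 < μ m) (s : Finset α) (n : α) (hn : n ∉ s)
    (D : Finpartition s) (hκD : 0 < κ D.parts.card) :
    ∃ t : ℝ, 0 < t ∧
      (∀ c ∈ D.parts,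
        kpW κ μ (insert (insert n c) (D.parts.erase c))
          = t * ((c.card + 1 : ℝ) * μ (c.card + 1) / μ c.card)) ∧
      kpW κ μ (insert {n} D.parts)
        = t * ((D.parts.card + 1 : ℝ) * (κ (D.parts.card + 1) / κ D.parts.card) * μ 1) := by
  set P := D.parts with hP
  have hcard1 : ∀ c ∈ P, 1 ≤ c.card := fun c hc =>
    Finset.card_pos.mpr (D.nonempty_of_mem_parts hc)
  have hpos : ∀ c ∈ P, 0 < (Nat.factorial c.card : ℝ) * μ c.card := fun c hc =>
    mul_pos (by positivity) (hμ _ (hcard1 c hc))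
  have hκne : κ P.card ≠ 0 := ne_of_gt hκD
  refine ⟨(Nat.factorial P.card : ℝ) * κ P.card * ∏ c ∈ P,
      (Nat.factorial c.card : ℝ) * μ c.card,
    mul_pos (mul_pos (by positivity) hκD) (Finset.prod_pos hpos), ?_, ?_⟩
  · intro c hc
    have hnc : n ∉ c := fun h => hn (D.le hc h)
    have hins : insert n c ∉ P.erase c := fun h =>
      hn (D.le (Finset.mem_of_mem_erase h) (Finset.mem_insert_self n c))
    have hμc : μ c.card ≠ 0 := ne_of_gt (hμ _ (hcard1 c hc))
    have hcardeq : (insert (insert n c) (P.erase c)).card = P.card := by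
      rw [Finset.card_insert_of_notMem hins, Finset.card_erase_of_mem hc,
        Nat.sub_add_cancel (Finset.card_pos.mpr ⟨c, hc⟩)]
    have hprod : ∏ d ∈ P, (Nat.factorial d.card : ℝ) * μ d.card
        = ((Nat.factorial c.card : ℝ) * μ c.card) *
          ∏ d ∈ P.erase c, (Nat.factorial d.card : ℝ) * μ d.card :=
      (Finset.mul_prod_erase P _ hc).symm
    rw [kpW, hcardeq, Finset.prod_insert hins, Finset.card_insert_of_notMem hnc, hprod,
      Nat.factorial_succ]
    field_simp
    push_cast
    ring
  · have hmem : ({n} : Finset α) ∉ P := fun h => hn (D.le h (Finset.mem_singleton_self n))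
    rw [kpW, Finset.card_insert_of_notMem hmem, Finset.prod_insert hmem,
      Finset.card_singleton, Nat.factorial_succ, Nat.factorial_one]
    field_simp
    push_cast
    ring
end

section
/- Let (C_N : N = 1, 2, ...) be the sequence of random partitions induced by an exchangeable random partition of ℕ. Then either the partition is the trivial partition into singletons almost surely on the non-dust part, or for each block with positive asymptotic frequency π_l > 0, the largest block size M_N satisfies liminf_{N→∞} M_N/N ≥ π_l almost surely; consequently, any infinitely exchangeable clustering model whose partitions are not all-singletons with probability one fails the microclustering property. -/
open MeasureTheory ProbabilityTheory Filter Finset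

/-- The size `M_N` of the largest block of the partition of `{0,…,N-1}` induced by
the label sequence `z` (fibers of `z · ω` restricted to `range N`). -/
def maxBlockSize (z : ℕ → Ω → ℕ) (ω : Ω) (N : ℕ) : ℕ :=
  (Finset.range N).sup fun n =>
    ((Finset.range N).filter (fun m => z m ω = z n ω)).card

lemma count_le_maxBlockSize {Ω : Type*} (z : ℕ → Ω → ℕ) (ω : Ω) (N l : ℕ) :
    ((Finset.range N).filter (fun m => z m ω = l)).card ≤ maxBlockSize z ω N := by
  rcases Finset.eq_empty_or_nonempty ((Finset.range N).filter (fun m => z m ω = l)) with h | h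
  · simp [h]
  · obtain ⟨n, hn⟩ := h
    rw [Finset.mem_filter] at hn
    calc ((Finset.range N).filter (fun m => z m ω = l)).card
        = ((Finset.range N).filter (fun m => z m ω = z n ω)).card := by rw [hn.2]
      _ ≤ maxBlockSize z ω N := by
          unfold maxBlockSize
          exact Finset.le_sup (f := fun n => ((Finset.range N).filter (fun m => z m ω = z n ω)).card) hn.1

lemma slln_indicator {Ω : Type*} [MeasurableSpace Ω] (μ : Measure Ω) [IsProbabilityMeasure μ]
    (z : ℕ → Ω → ℕ) (hmeas : ∀ n, Measurable (z n))
    (hindep : ProbabilityTheory.iIndepFun z μ)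
    (hident : ∀ n, MeasureTheory.Measure.map (z n) μ = MeasureTheory.Measure.map (z 0) μ)
    (l : ℕ) :
    ∀ᵐ ω ∂μ, Tendsto (fun N : ℕ => (∑ i ∈ range N, (if z i ω = l then (1:ℝ) else 0)) / N) atTop
      (nhds ((μ {ω | z 0 ω = l}).toReal)) := by
  set f : ℕ → ℝ := fun x => if x = l then 1 else 0 with hf
  have hfm : Measurable f := measurable_from_top
  set X : ℕ → Ω → ℝ := fun i => f ∘ z i with hX
  have hmX : ∀ i, Measurable (X i) := fun i => hfm.comp (hmeas i)
  have hint : Integrable (X 0) μ := by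
    apply MeasureTheory.Integrable.mono' (integrable_const (1:ℝ)) (hmX 0).aestronglyMeasurable
    filter_upwards with ω
    simp only [X, f, Function.comp]
    split <;> simp
  have hpi : Pairwise (Function.onFun (IndepFun · · μ) X) := fun i j hij =>
    (hindep.indepFun hij).comp hfm hfm
  have hid : ∀ i, IdentDistrib (X i) (X 0) μ μ := fun i =>
    { aemeasurable_fst := (hmX i).aemeasurable
      aemeasurable_snd := (hmX 0).aemeasurable
      map_eq := by
        rw [hX]
        show Measure.map (f ∘ z i) μ = Measure.map (f ∘ z 0) μ
        rw [← Measure.map_map hfm (hmeas i), ← Measure.map_map hfm (hmeas 0), hident i] }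
  have h := strong_law_ae_real X hint hpi hid
  have hE : μ[X 0] = (μ {ω | z 0 ω = l}).toReal := by
    have hX0 : X 0 = Set.indicator {ω | z 0 ω = l} (fun _ => (1:ℝ)) := by
      ext ω; simp [X, f, Set.indicator]
    have hms : MeasurableSet {ω | z 0 ω = l} := (hmeas 0) (measurableSet_singleton l)
    rw [hX0, integral_indicator_const (1:ℝ) hms]
    simp
    rfl
  rw [hE] at h
  exact h

lemma maxBlockSize_measurable {Ω : Type*} [MeasurableSpace Ω] (z : ℕ → Ω → ℕ)
    (hmeas : ∀ n, Measurable (z n)) (N : ℕ) :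
    Measurable (fun ω => maxBlockSize z ω N) := by
  unfold maxBlockSize
  have hcard : ∀ n : ℕ, Measurable (fun ω =>
      ((Finset.range N).filter (fun m => z m ω = z n ω)).card) := by
    intro n
    have : (fun ω => ((Finset.range N).filter (fun m => z m ω = z n ω)).card)
        = fun ω => ∑ m ∈ Finset.range N, if z m ω = z n ω then 1 else 0 := by
      ext ω
      rw [Finset.card_filter]
    rw [this]
    apply Finset.measurable_sum
    intro m _
    have hset : MeasurableSet {ω | z m ω = z n ω} := by
      have : {ω | z m ω = z n ω} = ⋃ k : ℕ, (z m ⁻¹' {k}) ∩ (z n ⁻¹' {k}) := by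
        ext ω
        simp only [Set.mem_setOf_eq, Set.mem_iUnion, Set.mem_inter_iff, Set.mem_preimage,
          Set.mem_singleton_iff]
        constructor
        · intro h; exact ⟨z n ω, h, rfl⟩
        · rintro ⟨k, hk1, hk2⟩; rw [hk1, hk2]
      rw [this]
      exact MeasurableSet.iUnion fun k =>
        ((hmeas m) (measurableSet_singleton k)).inter ((hmeas n) (measurableSet_singleton k))
    exact Measurable.ite hset measurable_const measurable_const
  -- sup over a finset
  have hgen : ∀ s : Finset ℕ, Measurable (fun ω => s.sup fun n =>
      ((Finset.range N).filter (fun m => z m ω = z n ω)).card) := by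
    intro s
    induction s using Finset.induction with
    | empty => simp only [Finset.sup_empty]; exact measurable_const
    | insert a s hx ih =>
      simp only [Finset.sup_insert]
      exact Measurable.max (hcard a) ih
  exact hgen (Finset.range N)

lemma liminf_ge_aux {Ω : Type*} [MeasurableSpace Ω] (μ : Measure Ω) [IsProbabilityMeasure μ]
    (z : ℕ → Ω → ℕ) (hmeas : ∀ n, Measurable (z n))
    (hindep : ProbabilityTheory.iIndepFun z μ)
    (hident : ∀ n, MeasureTheory.Measure.map (z n) μ = MeasureTheory.Measure.map (z 0) μ)
    (π : ℕ → ℝ) (hlaw : ∀ l, (μ {ω | z 0 ω = l}).toReal = π l) (l : ℕ) :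
    ∀ᵐ ω ∂μ, π l ≤ Filter.atTop.liminf (fun N : ℕ => (maxBlockSize z ω N : ℝ) / N) := by
  filter_upwards [slln_indicator μ z hmeas hindep hident l] with ω hω
  rw [hlaw l] at hω
  set u : ℕ → ℝ := fun N => (∑ i ∈ range N, (if z i ω = l then (1:ℝ) else 0)) / N with hu
  set v : ℕ → ℝ := fun N => (maxBlockSize z ω N : ℝ) / N with hv
  have huv : ∀ N, u N ≤ v N := by
    intro N
    rcases Nat.eq_zero_or_pos N with rfl | hN
    · simp [u, v]
    · have h1 : (∑ i ∈ range N, (if z i ω = l then (1:ℝ) else 0))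
          = (((Finset.range N).filter (fun m => z m ω = l)).card : ℝ) := by
        rw [Finset.card_filter]; push_cast; rfl
      show (∑ i ∈ range N, if z i ω = l then (1:ℝ) else 0) / N ≤ (maxBlockSize z ω N : ℝ) / N
      rw [h1]
      apply div_le_div_of_nonneg_right _ (by positivity)
      exact_mod_cast count_le_maxBlockSize z ω N l
  have hlim : Filter.atTop.liminf u = π l := hω.liminf_eq
  rw [← hlim]
  have hMle : ∀ N : ℕ, maxBlockSize z ω N ≤ N := by
    intro N
    apply Finset.sup_le
    intro n _
    exact le_trans (Finset.card_filter_le _ _) (le_of_eq (Finset.card_range N))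
  refine Filter.liminf_le_liminf (Filter.Eventually.of_forall huv) ?_ ?_
  · refine Filter.isBoundedUnder_of ⟨0, fun N => ?_⟩
    show (0:ℝ) ≤ (∑ i ∈ range N, if z i ω = l then (1:ℝ) else 0) / N
    positivity
  · refine Filter.IsBoundedUnder.isCoboundedUnder_ge (Filter.isBoundedUnder_of ⟨1, fun N => ?_⟩)
    show (maxBlockSize z ω N : ℝ) / N ≤ 1
    rcases Nat.eq_zero_or_pos N with rfl | hN
    · simp
    · rw [div_le_one (by exact_mod_cast hN)]
      exact_mod_cast hMle N

/-- Kingman paintbox consequence: let `(C_N)` be the partition sequence induced by an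
exchangeable random partition of `ℕ`, given via its paintbox representation by labels
`z₁, z₂, …` drawn i.i.d. from a probability vector `π` (the non-dust part).  Then
either the partition restricted to the non-dust part is trivially all singletons
(all `π_l = 0`), or for each block with positive asymptotic frequency `π_l > 0` the
largest block size `M_N` satisfies `liminf M_N/N ≥ π_l` almost surely; consequently,
if the partitions are not all-singletons with probability one (some `π_l > 0`), the
model fails the microclustering property (`M_N/N → 0` in probability fails). -/
theorem exchangeable_partition_fails_microclustering
    {Ω : Type*} [MeasurableSpace Ω] (μ : Measure Ω) [IsProbabilityMeasure μ]
    (z : ℕ → Ω → ℕ) (hmeas : ∀ n, Measurable (z n))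
    (hindep : ProbabilityTheory.iIndepFun z μ)
    (hident : ∀ n, MeasureTheory.Measure.map (z n) μ = MeasureTheory.Measure.map (z 0) μ)
    (π : ℕ → ℝ) (hπ0 : ∀ l, 0 ≤ π l) (hπ1 : ∑' l, π l ≤ 1)
    (hlaw : ∀ l, (μ {ω | z 0 ω = l}).toReal = π l) :
    ((∀ l, π l = 0) ∨
      (∀ l, 0 < π l → ∀ᵐ ω ∂μ,
        π l ≤ Filter.atTop.liminf (fun N : ℕ => (maxBlockSize z ω N : ℝ) / N))) ∧
    ((∃ l, 0 < π l) →
      ∃ ε > (0 : ℝ), ¬ Tendsto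
        (fun N : ℕ => (μ {ω | ε ≤ (maxBlockSize z ω N : ℝ) / N}).toReal)
        atTop (nhds 0)) := by
  constructor
  · exact Or.inr fun l _ => liminf_ge_aux μ z hmeas hindep hident π hlaw l
  · rintro ⟨l, hl⟩
    refine ⟨π l / 2, by linarith, ?_⟩
    intro hT
    set ε := π l / 2 with hε
    set A : ℕ → Set Ω := fun N => {ω | ε ≤ (maxBlockSize z ω N : ℝ) / N} with hA
    have hAm : ∀ N, MeasurableSet (A N) := by
      intro N
      have hm : Measurable (fun ω => (maxBlockSize z ω N : ℝ) / N) :=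
        (measurable_from_top.comp (maxBlockSize_measurable z hmeas N)).div measurable_const
      exact measurableSet_le measurable_const hm
    have hae : ∀ᵐ ω ∂μ, ∀ᶠ N in atTop, ω ∈ A N := by
      filter_upwards [liminf_ge_aux μ z hmeas hindep hident π hlaw l] with ω hω
      have : ε < Filter.atTop.liminf (fun N : ℕ => (maxBlockSize z ω N : ℝ) / N) :=
        lt_of_lt_of_le (by linarith) hω
      have hbdd : Filter.IsBoundedUnder (· ≥ ·) atTop
          (fun N : ℕ => (maxBlockSize z ω N : ℝ) / N) := by
        refine Filter.isBoundedUnder_of ⟨0, fun N => ?_⟩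
        show (0:ℝ) ≤ (maxBlockSize z ω N : ℝ) / N
        positivity
      filter_upwards [Filter.eventually_lt_of_lt_liminf this hbdd] with N hN
      exact le_of_lt hN
    -- dominated convergence for indicators
    have htend : Tendsto (fun N => ∫ ω, (A N).indicator (fun _ => (1:ℝ)) ω ∂μ) atTop
        (nhds (∫ _ω, (1:ℝ) ∂μ)) := by
      apply tendsto_integral_of_dominated_convergence (fun _ => (1:ℝ))
      · exact fun N => ((measurable_one.indicator (hAm N)).aestronglyMeasurable)
      · exact integrable_const 1
      · intro N
        filter_upwards with ω
        by_cases h : ω ∈ A N <;> simp [Set.indicator, h]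
      · filter_upwards [hae] with ω hω
        apply Filter.Tendsto.congr' _ tendsto_const_nhds
        filter_upwards [hω] with N hN
        simp [Set.indicator, hN]
    have hint1 : (∫ _ω, (1:ℝ) ∂μ) = 1 := by simp
    have heq : ∀ N, ∫ ω, (A N).indicator (fun _ => (1:ℝ)) ω ∂μ = (μ (A N)).toReal := by
      intro N
      rw [integral_indicator_const (1:ℝ) (hAm N)]
      simp
      rfl
    rw [hint1] at htend
    have : Tendsto (fun N => (μ (A N)).toReal) atTop (nhds 1) := by
      simpa only [heq] using htend
    have h01 : (0:ℝ) = 1 := tendsto_nhds_unique hT this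
    norm_num at h01
end
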